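/- Let μ, q, g, γ ∈ ℝ with β := (μ − (1 − (1+q)²)²)/3 ≥ 0. Then the lowest-order Eckhaus coefficient of the model-2 stability determinant is A₂: lim_{k→0, k≠0} detJ₂(k, 0)/k² = 12β(3(1+q)² − 1) − 16q²(1+q)²(2+q)². -/

import Mathlib

open Filter Topology

/-- The determinant of the model-2 stability matrix `J₂` as a function of the
perturbation wavevector `(k, l)`, with `β = (μ − (1 − (1+q)²)²)/3`. -/
noncomputable def detJ2 (μ q g γ : ℝ) (k l : ℝ) : ℝ :=
  let β := (μ - (1 - (1 + q)^2)^2) / 3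
  let M₁ := μ - (1 - ((1 + q + k)^2 + l^2))^2 - 6*β
  let M₂ := -3*β
  let M₃ := -l*(1 + q)*Real.sqrt β / (k^2 + l^2)
  let M₄ := μ - (1 - ((1 + q - k)^2 + l^2))^2 - 6*β
  let M₅ := Real.exp (-γ^2*(k^2 + l^2)) * l * (1 + q) * Real.sqrt β * (2*k*(1 + q) + k^2 + l^2)
  let M₆ := Real.exp (-γ^2*(k^2 + l^2)) * l * (1 + q) * Real.sqrt β * (2*k*(1 + q) - k^2 - l^2)
  (M₁ + g*M₃*M₅) * (M₄ - g*M₃*M₆) - (M₂ + g*M₃*M₆) * (M₂ - g*M₃*M₅)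

/-- The lowest-order Eckhaus coefficient of the model-2 stability determinant:
`lim_{k→0, k≠0} detJ₂(k,0)/k² = A₂ = 12β(3(1+q)²−1) − 16q²(1+q)²(2+q)²`. -/
theorem detJ2_eckhaus_coefficient (μ q g γ β : ℝ)
    (hβ : β = (μ - (1 - (1 + q)^2)^2) / 3) (hβ0 : 0 ≤ β) :
    Tendsto (fun k : ℝ => detJ2 μ q g γ k 0 / k^2) (𝓝[≠] 0)
      (𝓝 (12*β*(3*(1 + q)^2 - 1) - 16*q^2*(1 + q)^2*(2 + q)^2)) := by
  have hμ : μ = 3*β + (1 - (1+q)^2)^2 := by rw [hβ]; ring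
  set Q : ℝ → ℝ := fun k =>
    4*(1-(1+q)^2)^2*(k^2-4*(1+q)^2) - 4*(1-(1+q)^2)*k^2*(k^2-4*(1+q)^2)
      + k^2*(k^2-4*(1+q)^2)^2 - 3*β*(4*(1-(1+q)^2) - 2*k^2 - 8*(1+q)^2) with hQ
  have hQ0 : Q 0 = 12*β*(3*(1 + q)^2 - 1) - 16*q^2*(1 + q)^2*(2 + q)^2 := by
    simp only [hQ]; ring
  have hcont : Tendsto Q (𝓝[≠] (0:ℝ)) (𝓝 (Q 0)) := by
    apply Tendsto.mono_left _ nhdsWithin_le_nhds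
    exact (Continuous.tendsto (by fun_prop) 0)
  rw [← hQ0]
  apply hcont.congr'
  filter_upwards [self_mem_nhdsWithin] with k hk
  have hk2 : (k:ℝ)^2 ≠ 0 := pow_ne_zero 2 hk
  simp only [detJ2, hQ]
  rw [← hβ]
  have hk0 : k ≠ 0 := hk
  field_simp
  subst hμ
  ring
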